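/- Let σ, b > 0, let F : ℝ → ℝ satisfy |F(t)| ≤ F₀ for all t, and let x, y, w : [0,∞) → ℝ be differentiable functions satisfying x′ = −σx + σy, y′ = −y − σx − xw, and w′ = −bw + xy + F(t) for all t ≥ 0. Set σ₀ = min{1, σ, b/2} and |u(t)|² = x(t)² + y(t)² + w(t)². Then for every t ≥ 0, |u(t)|² ≤ |u(0)|² e^{−2σ₀ t} + F₀²/(2σ₀ b); in particular |u(t)| ≤ |u(0)| e^{−σ₀ t} + F₀/√(2σ₀ b). -/

import Mathlib

open Real Set

lemma sqrt_add_le' {a b : ℝ} (ha : 0 ≤ a) (hb : 0 ≤ b) :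
    Real.sqrt (a + b) ≤ Real.sqrt a + Real.sqrt b := by
  have h : a + b ≤ (Real.sqrt a + Real.sqrt b) ^ 2 := by
    have ha' := Real.sq_sqrt ha
    have hb' := Real.sq_sqrt hb
    nlinarith [mul_nonneg (Real.sqrt_nonneg a) (Real.sqrt_nonneg b)]
  calc Real.sqrt (a + b) ≤ Real.sqrt ((Real.sqrt a + Real.sqrt b) ^ 2) :=
        Real.sqrt_le_sqrt h
    _ = Real.sqrt a + Real.sqrt b :=
        Real.sqrt_sq (by positivity)

/-- Dissipativity estimate for the transformed non-autonomous Lorenz system: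
with `σ₀ = min{1, σ, b/2}` and `|F(t)| ≤ F₀`, every solution of
`x′ = −σx + σy`, `y′ = −y − σx − xw`, `w′ = −bw + xy + F(t)` on `[0,∞)` satisfies
`|u(t)|² ≤ |u(0)|² e^{−2σ₀t} + F₀²/(2σ₀b)`, and in particular
`|u(t)| ≤ |u(0)| e^{−σ₀t} + F₀/√(2σ₀b)`. -/
theorem stmt17 (σ b F₀ : ℝ) (hσ : 0 < σ) (hb : 0 < b)
    (F : ℝ → ℝ) (hF : ∀ t : ℝ, |F t| ≤ F₀)
    (x y w : ℝ → ℝ)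
    (hx : ∀ t ≥ (0 : ℝ), HasDerivWithinAt x (-σ * x t + σ * y t) (Ici 0) t)
    (hy : ∀ t ≥ (0 : ℝ), HasDerivWithinAt y (-y t - σ * x t - x t * w t) (Ici 0) t)
    (hw : ∀ t ≥ (0 : ℝ), HasDerivWithinAt w (-b * w t + x t * y t + F t) (Ici 0) t)
    (σ₀ : ℝ) (hσ₀ : σ₀ = min 1 (min σ (b / 2))) :
    ∀ t ≥ (0 : ℝ),
      x t ^ 2 + y t ^ 2 + w t ^ 2 ≤
        (x 0 ^ 2 + y 0 ^ 2 + w 0 ^ 2) * Real.exp (-2 * σ₀ * t) + F₀ ^ 2 / (2 * σ₀ * b) ∧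
      Real.sqrt (x t ^ 2 + y t ^ 2 + w t ^ 2) ≤
        Real.sqrt (x 0 ^ 2 + y 0 ^ 2 + w 0 ^ 2) * Real.exp (-σ₀ * t) +
          F₀ / Real.sqrt (2 * σ₀ * b) := by
  have hσ₀pos : 0 < σ₀ := by
    rw [hσ₀]; exact lt_min one_pos (lt_min hσ (by linarith))
  have hσ₀1 : σ₀ ≤ 1 := hσ₀ ▸ min_le_left _ _
  have hσ₀σ : σ₀ ≤ σ := hσ₀ ▸ le_trans (min_le_right _ _) (min_le_left _ _)
  have hσ₀b : σ₀ ≤ b / 2 := hσ₀ ▸ le_trans (min_le_right _ _) (min_le_right _ _)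
  have hF₀ : 0 ≤ F₀ := le_trans (abs_nonneg _) (hF 0)
  set K : ℝ := F₀ ^ 2 / (2 * σ₀ * b) with hK
  have hKnn : 0 ≤ K := by positivity
  set V : ℝ → ℝ := fun t => x t ^ 2 + y t ^ 2 + w t ^ 2 with hV
  set H : ℝ → ℝ := fun t => (V t - K) * Real.exp (2 * σ₀ * t) with hH
  -- derivative of V
  have hVd : ∀ t ≥ (0 : ℝ), HasDerivWithinAt V
      (2 * x t * (-σ * x t + σ * y t) + 2 * y t * (-y t - σ * x t - x t * w t)
        + 2 * w t * (-b * w t + x t * y t + F t)) (Ici 0) t := by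
    intro t ht
    have h1 := ((hx t ht).pow 2)
    have h2 := ((hy t ht).pow 2)
    have h3 := ((hw t ht).pow 2)
    have := (h1.add h2).add h3
    refine this.congr_deriv ?_
    push_cast
    ring
  have hHd : ∀ t ≥ (0 : ℝ), HasDerivWithinAt H
      ((2 * x t * (-σ * x t + σ * y t) + 2 * y t * (-y t - σ * x t - x t * w t)
        + 2 * w t * (-b * w t + x t * y t + F t) + (V t - K) * (2 * σ₀))
        * Real.exp (2 * σ₀ * t)) (Ici 0) t := by
    intro t ht
    have hexp : HasDerivWithinAt (fun s => Real.exp (2 * σ₀ * s))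
        (Real.exp (2 * σ₀ * t) * (2 * σ₀)) (Ici 0) t := by
      have : HasDerivAt (fun s => Real.exp (2 * σ₀ * s)) (Real.exp (2 * σ₀ * t) * (2 * σ₀)) t :=
        (((hasDerivAt_id t).const_mul (2 * σ₀)).exp).congr_deriv (by simp only [id_eq]; ring)
      exact this.hasDerivWithinAt
    have := ((hVd t ht).sub_const K).mul hexp
    refine this.congr_deriv ?_
    ring
  have hHd' : ∀ t ≥ (0 : ℝ),
      2 * x t * (-σ * x t + σ * y t) + 2 * y t * (-y t - σ * x t - x t * w t)
        + 2 * w t * (-b * w t + x t * y t + F t) + (V t - K) * (2 * σ₀) ≤ 0 := by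
    intro t _
    have hFt := abs_le.mp (hF t)
    have hFsq : F t ^ 2 ≤ F₀ ^ 2 := by nlinarith [abs_nonneg (F t), sq_abs (F t), hF t]
    have h2K : 2 * σ₀ * K = F₀ ^ 2 / b := by
      rw [hK]; field_simp
    have hKey : 2 * σ₀ * K ≥ F t ^ 2 / b := by
      rw [h2K]; exact div_le_div_of_nonneg_right hFsq hb.le
    have hsq : 0 ≤ (b * w t - F t) ^ 2 / b := by positivity
    simp only [hV]
    have hb' : b ≠ 0 := ne_of_gt hb
    have expand : (b * w t - F t) ^ 2 / b = b * w t ^ 2 - 2 * w t * F t + F t ^ 2 / b := by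
      field_simp; ring
    nlinarith [sq_nonneg (x t), sq_nonneg (y t), sq_nonneg (w t)]
  -- H is antitone on Ici 0
  have hHanti : AntitoneOn H (Ici (0 : ℝ)) := by
    apply antitoneOn_of_hasDerivWithinAt_nonpos (convex_Ici 0)
      (f' := fun t => (2 * x t * (-σ * x t + σ * y t) + 2 * y t * (-y t - σ * x t - x t * w t)
        + 2 * w t * (-b * w t + x t * y t + F t) + (V t - K) * (2 * σ₀))
        * Real.exp (2 * σ₀ * t))
    · intro t ht
      exact (hHd t ht).continuousWithinAt
    · intro t ht
      rw [interior_Ici] at ht ⊢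
      exact (hHd t (le_of_lt ht)).mono Ioi_subset_Ici_self
    · intro t ht
      rw [interior_Ici] at ht
      exact mul_nonpos_of_nonpos_of_nonneg (hHd' t (le_of_lt ht)) (Real.exp_pos _).le
  intro t ht
  have hHt : H t ≤ H 0 := hHanti (self_mem_Ici) ht ht
  have hE : (0 : ℝ) < Real.exp (2 * σ₀ * t) := Real.exp_pos _
  have hE1 : (1 : ℝ) ≤ Real.exp (2 * σ₀ * t) := Real.one_le_exp (by positivity)
  have hH0 : H 0 = V 0 - K := by simp [hH]
  have hVt : V t ≤ V 0 * Real.exp (-2 * σ₀ * t) + K := by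
    have hneg : Real.exp (-2 * σ₀ * t) = (Real.exp (2 * σ₀ * t))⁻¹ := by
      rw [← Real.exp_neg]; ring_nf
    have key : V t * Real.exp (2 * σ₀ * t) ≤ V 0 + K * Real.exp (2 * σ₀ * t) := by
      have := hHt
      rw [hH0] at this
      simp only [hH] at this
      nlinarith
    rw [hneg]
    calc V t = (V t * Real.exp (2 * σ₀ * t)) * (Real.exp (2 * σ₀ * t))⁻¹ := by
            field_simp
      _ ≤ (V 0 + K * Real.exp (2 * σ₀ * t)) * (Real.exp (2 * σ₀ * t))⁻¹ := by
            apply mul_le_mul_of_nonneg_right key (by positivity)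
      _ = V 0 * (Real.exp (2 * σ₀ * t))⁻¹ + K := by field_simp
  refine ⟨hVt, ?_⟩
  have hV0nn : 0 ≤ V 0 := by positivity
  have h1 : Real.sqrt (V t) ≤ Real.sqrt (V 0 * Real.exp (-2 * σ₀ * t) + K) :=
    Real.sqrt_le_sqrt hVt
  have h2 : Real.sqrt (V 0 * Real.exp (-2 * σ₀ * t) + K)
      ≤ Real.sqrt (V 0 * Real.exp (-2 * σ₀ * t)) + Real.sqrt K :=
    sqrt_add_le' (by positivity) hKnn
  have h3 : Real.sqrt (V 0 * Real.exp (-2 * σ₀ * t)) = Real.sqrt (V 0) * Real.exp (-σ₀ * t) := by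
    rw [Real.sqrt_mul hV0nn, ← Real.exp_half]
    ring_nf
  have h4 : Real.sqrt K = F₀ / Real.sqrt (2 * σ₀ * b) := by
    rw [hK, Real.sqrt_div (sq_nonneg F₀), Real.sqrt_sq hF₀]
  calc Real.sqrt (V t) ≤ _ := h1
    _ ≤ _ := h2
    _ = Real.sqrt (V 0) * Real.exp (-σ₀ * t) + F₀ / Real.sqrt (2 * σ₀ * b) := by
        rw [h3, h4]
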